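/- Let Δt > 0 and ξ, w, Γ⁰, A, B ∈ ℝ³ be given, and perform one step of the heavy-top midpoint integrator: set Γ̃ := cay(−Δtξ̂)Γ⁰ and Γ¹ := cay(−Δtξ̂)Γ̃, and suppose A, B satisfy d⁻(Δt,ξ,A) − w × Γ̃ = d⁺(Δt,ξ,B); set Π⁰ := d⁺(Δt,ξ,A) and Π¹ := d⁻(Δt,ξ,B). Then the step is a coadjoint update on the semidirect product se(3)* ≅ ℝ³ × ℝ³: there exist a rotation matrix R ∈ SO(3) (i.e. RᵀR = I, det R = 1) and a vector u ∈ ℝ³ such that Π¹ = Rᵀ(Π⁰ − u × Γ⁰) and Γ¹ = RᵀΓ⁰. In particular the coadjoint orbit of (Π⁰, Γ⁰) under SE(3) is preserved. -/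

import Mathlib

open Matrix

noncomputable section

/-- The hat map: the 3×3 skew-symmetric matrix `ξ̂` with `ξ̂ v = ξ × v`. -/
def hat (ξ : Fin 3 → ℝ) : Matrix (Fin 3) (Fin 3) ℝ :=
  !![0, -ξ 2, ξ 1; ξ 2, 0, -ξ 0; -ξ 1, ξ 0, 0]

/-- The Cayley transform `cay(hξ̂) = (I − (h/2)ξ̂)⁻¹ (I + (h/2)ξ̂)`. -/
def cay (h : ℝ) (ξ : Fin 3 → ℝ) : Matrix (Fin 3) (Fin 3) ℝ :=
  (1 - (h / 2) • hat ξ)⁻¹ * (1 + (h / 2) • hat ξ)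

/-- `d⁺(h,ξ,Π) = Π + (h/2) ξ×Π − (h²/4)(ξ·Π)ξ`. -/
def dplus (h : ℝ) (ξ Pv : Fin 3 → ℝ) : Fin 3 → ℝ :=
  Pv + (h / 2) • (ξ ⨯₃ Pv) - (h ^ 2 / 4 * (ξ ⬝ᵥ Pv)) • ξ

/-- `d⁻(h,ξ,Π) = Π − (h/2) ξ×Π − (h²/4)(ξ·Π)ξ`. -/
def dminus (h : ℝ) (ξ Pv : Fin 3 → ℝ) : Fin 3 → ℝ :=
  Pv - (h / 2) • (ξ ⨯₃ Pv) - (h ^ 2 / 4 * (ξ ⬝ᵥ Pv)) • ξ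

lemma hat_transpose (ξ : Fin 3 → ℝ) : (hat ξ)ᵀ = -hat ξ := by
  ext i j; fin_cases i <;> fin_cases j <;> simp [hat]

lemma det_M (c : ℝ) (ξ : Fin 3 → ℝ) :
    (1 + c • hat ξ).det = 1 + c^2 * (ξ 0^2 + ξ 1^2 + ξ 2^2) := by
  simp [Matrix.det_fin_three, hat, Matrix.one_apply]; ring

lemma M_comm (c : ℝ) (ξ : Fin 3 → ℝ) :
    (1 + c • hat ξ) * (1 - c • hat ξ) = (1 - c • hat ξ) * (1 + c • hat ξ) := by
  have h : ∀ X : Matrix (Fin 3) (Fin 3) ℝ, (1+X)*(1-X) = (1-X)*(1+X) := fun X => by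
    noncomm_ring
  exact h _

lemma key (h : ℝ) (ξ P : Fin 3 → ℝ) :
    (1 - (h/2) • hat ξ).mulVec (dplus h ξ P)
      = (1 + (h/2) • hat ξ).mulVec (dminus h ξ P) := by
  funext i
  fin_cases i <;>
    simp [dplus, dminus, hat, Matrix.mulVec, dotProduct, Fin.sum_univ_three,
      cross_apply, Matrix.one_apply, Matrix.vecHead, Matrix.vecTail] <;> ring

lemma cross_mulVec_det (M : Matrix (Fin 3) (Fin 3) ℝ) (a b : Fin 3 → ℝ) :
    Mᵀ.mulVec ((M.mulVec a) ⨯₃ (M.mulVec b)) = M.det • (a ⨯₃ b) := by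
  funext i
  fin_cases i <;>
    simp [Matrix.mulVec, dotProduct, Fin.sum_univ_three, cross_apply,
      Matrix.det_fin_three] <;> ring

/-- One step of the heavy-top midpoint integrator is a coadjoint update on
`se(3)* ≅ ℝ³ × ℝ³`: there are `R ∈ SO(3)` and `u ∈ ℝ³` with
`Π¹ = Rᵀ(Π⁰ − u × Γ⁰)` and `Γ¹ = RᵀΓ⁰`.  In particular the `SE(3)`-coadjoint orbit
of `(Π⁰, Γ⁰)` is preserved. -/
theorem heavy_top_step_is_coadjoint_update
    (Δt : ℝ) (hΔt : 0 < Δt) (ξ w Γ₀ A B Γt Γ₁ Pv₀ Pv₁ : Fin 3 → ℝ)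
    (hΓt : Γt = (cay (-Δt) ξ).mulVec Γ₀)
    (hΓ₁ : Γ₁ = (cay (-Δt) ξ).mulVec Γt)
    (hAB : dminus Δt ξ A - w ⨯₃ Γt = dplus Δt ξ B)
    (hPv₀ : Pv₀ = dplus Δt ξ A)
    (hPv₁ : Pv₁ = dminus Δt ξ B) :
    ∃ (R : Matrix (Fin 3) (Fin 3) ℝ) (u : Fin 3 → ℝ),
      Rᵀ * R = 1 ∧ R.det = 1 ∧
      Pv₁ = Rᵀ.mulVec (Pv₀ - u ⨯₃ Γ₀) ∧ Γ₁ = Rᵀ.mulVec Γ₀ := by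
  set M : Matrix (Fin 3) (Fin 3) ℝ := 1 + (Δt/2) • hat ξ with hM
  have hMt : Mᵀ = 1 - (Δt/2) • hat ξ := by
    rw [hM, transpose_add, transpose_smul, transpose_one, hat_transpose, smul_neg,
      sub_eq_add_neg]
  -- determinant positivity
  have hdet : M.det = 1 + (Δt/2)^2 * (ξ 0^2 + ξ 1^2 + ξ 2^2) := det_M _ _
  have hdpos : 0 < M.det := by rw [hdet]; positivity
  have hu : IsUnit M.det := isUnit_iff_ne_zero.2 (ne_of_gt hdpos)
  have hut : IsUnit Mᵀ.det := by rwa [det_transpose]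
  set C : Matrix (Fin 3) (Fin 3) ℝ := M⁻¹ * Mᵀ with hCdef
  have hC : cay (-Δt) ξ = C := by
    rw [cay, hCdef, hM, hMt]
    rw [neg_div, neg_smul, sub_neg_eq_add, ← sub_eq_add_neg]
  -- C maps d⁺ to d⁻
  have hCd : ∀ P, C.mulVec (dplus Δt ξ P) = dminus Δt ξ P := by
    intro P
    have hk : Mᵀ.mulVec (dplus Δt ξ P) = M.mulVec (dminus Δt ξ P) := by
      rw [hMt, hM]; exact key Δt ξ P
    calc C.mulVec (dplus Δt ξ P) = (M⁻¹).mulVec (Mᵀ.mulVec (dplus Δt ξ P)) := by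
          rw [hCdef, ← mulVec_mulVec]
      _ = (M⁻¹ * M).mulVec (dminus Δt ξ P) := by rw [hk, mulVec_mulVec]
      _ = dminus Δt ξ P := by rw [Matrix.nonsing_inv_mul _ hu, one_mulVec]
  -- commuting
  have hcomm : M * Mᵀ = Mᵀ * M := by rw [hM, hMt]; exact M_comm _ _
  -- orthogonality
  have hCtC : Cᵀ * C = 1 := by
    have h1 : Cᵀ = M * (Mᵀ)⁻¹ := by
      rw [hCdef, transpose_mul, transpose_transpose, transpose_nonsing_inv]
    rw [h1, hCdef]
    calc M * (Mᵀ)⁻¹ * (M⁻¹ * Mᵀ) = M * ((Mᵀ)⁻¹ * M⁻¹) * Mᵀ := by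
          simp only [Matrix.mul_assoc]
      _ = M * (M * Mᵀ)⁻¹ * Mᵀ := by rw [Matrix.mul_inv_rev]
      _ = M * (Mᵀ * M)⁻¹ * Mᵀ := by rw [hcomm]
      _ = M * (M⁻¹ * (Mᵀ)⁻¹) * Mᵀ := by rw [Matrix.mul_inv_rev]
      _ = (M * M⁻¹) * ((Mᵀ)⁻¹ * Mᵀ) := by simp only [Matrix.mul_assoc]
      _ = 1 := by rw [Matrix.mul_nonsing_inv _ hu, Matrix.nonsing_inv_mul _ hut, one_mul]
  have hCCt : C * Cᵀ = 1 := mul_eq_one_comm.mp hCtC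
  have hdetC : C.det = 1 := by
    rw [hCdef, det_mul, det_nonsing_inv, det_transpose, Ring.inverse_mul_cancel _ hu]
  refine ⟨(C * C)ᵀ, Cᵀ.mulVec w, ?_, ?_, ?_, ?_⟩
  · rw [transpose_transpose, transpose_mul]
    calc C * C * (Cᵀ * Cᵀ) = C * (C * Cᵀ) * Cᵀ := by simp only [Matrix.mul_assoc]
      _ = 1 := by rw [hCCt, mul_one, hCCt]
  · rw [det_transpose, det_mul, hdetC, mul_one]
  · -- momentum update
    have hw : C.mulVec (Cᵀ.mulVec w) = w := by
      rw [mulVec_mulVec, hCCt, one_mulVec]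
    have hcross : C.mulVec ((Cᵀ.mulVec w) ⨯₃ Γ₀) = w ⨯₃ (C.mulVec Γ₀) := by
      have h2 := cross_mulVec_det C (Cᵀ.mulVec w) Γ₀
      rw [hw, hdetC, one_smul] at h2
      calc C.mulVec ((Cᵀ.mulVec w) ⨯₃ Γ₀)
          = C.mulVec (Cᵀ.mulVec (w ⨯₃ (C.mulVec Γ₀))) := by rw [h2]
        _ = w ⨯₃ (C.mulVec Γ₀) := by rw [mulVec_mulVec, hCCt, one_mulVec]
    have hGt : Γt = C.mulVec Γ₀ := by rw [hΓt, hC]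
    have h3 : dminus Δt ξ A = C.mulVec Pv₀ := by rw [hPv₀, hCd]
    rw [transpose_transpose, hPv₁, ← hCd B, ← hAB, h3, hGt, ← hcross, ← mulVec_sub,
      mulVec_mulVec]
  · rw [transpose_transpose, hΓ₁, hΓt, hC, mulVec_mulVec]
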